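/- arXiv:2105.04292 — 2 statements merged into one kernel-verified Lean document; each statement's English description precedes it below -/
import Mathlib

section
/- If r ≥ 2, then the edge general position number of the grid P_r □ P_2 equals r + 2, i.e., gp_e(P_r □ P_2) = r + 2. -/
open SimpleGraph

/-- A walk is a geodesic if its length equals the distance between its endpoints. -/
def IsGeodesic {V : Type*} (G : SimpleGraph V) {u v : V} (p : G.Walk u v) : Prop :=
  p.length = G.dist u v

/-- A set `S` of edges of `G` is an edge general position set if no geodesic of `G`
contains three (distinct) edges of `S`. -/
def IsEdgeGPSet {V : Type*} (G : SimpleGraph V) (S : Set (Sym2 V)) : Prop :=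
  S ⊆ G.edgeSet ∧
  ∀ ⦃u v : V⦄ (p : G.Walk u v), IsGeodesic G p →
    ∀ e₁ ∈ S, ∀ e₂ ∈ S, ∀ e₃ ∈ S,
      e₁ ∈ p.edges → e₂ ∈ p.edges → e₃ ∈ p.edges →
        e₁ = e₂ ∨ e₁ = e₃ ∨ e₂ = e₃

/-- The grid graph `P_r □ P_s`, the Cartesian (box) product of two path graphs. -/
def gridGraph (r s : ℕ) : SimpleGraph (Fin r × Fin s) :=
  SimpleGraph.boxProd (pathGraph r) (pathGraph s)

namespace EgpAux

variable {r : ℕ}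

lemma grid_adj {u v : Fin r × Fin 2} :
    (gridGraph r 2).Adj u v ↔
      ((u.1.val + 1 = v.1.val ∨ v.1.val + 1 = u.1.val) ∧ u.2 = v.2) ∨
      ((u.2.val + 1 = v.2.val ∨ v.2.val + 1 = u.2.val) ∧ u.1 = v.1) := by
  rw [gridGraph, boxProd_adj, pathGraph_adj, pathGraph_adj]

/-- horizontal edge at gap `g` in row `z` -/
def hedge (g : ℕ) (h : g + 1 < r) (z : Fin 2) : Sym2 (Fin r × Fin 2) :=
  s((⟨g, by omega⟩, z), (⟨g + 1, h⟩, z))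

/-- vertical edge at column `c` -/
def vedge (c : ℕ) (h : c < r) : Sym2 (Fin r × Fin 2) :=
  s((⟨c, h⟩, 0), (⟨c, h⟩, 1))

lemma hedge_mem_edgeSet (g : ℕ) (h : g + 1 < r) (z : Fin 2) :
    hedge g h z ∈ (gridGraph r 2).edgeSet := by
  rw [hedge, mem_edgeSet, grid_adj]; exact Or.inl ⟨Or.inl rfl, rfl⟩

lemma vedge_mem_edgeSet (c : ℕ) (h : c < r) :
    vedge c h ∈ (gridGraph r 2).edgeSet := by
  rw [vedge, mem_edgeSet, grid_adj]; exact Or.inr ⟨Or.inl rfl, rfl⟩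

lemma hedge_eq_iff {g g' : ℕ} {h : g + 1 < r} {h' : g' + 1 < r} {z z' : Fin 2} :
    hedge g h z = hedge g' h' z' ↔ g = g' ∧ z = z' := by
  simp only [hedge, Sym2.eq_iff, Prod.mk.injEq, Fin.mk.injEq]
  constructor
  · rintro (⟨⟨h1, h2⟩, -⟩ | ⟨⟨h1, -⟩, h2, -⟩)
    · exact ⟨h1, h2⟩
    · omega
  · rintro ⟨rfl, rfl⟩; left; simp

lemma vedge_eq_iff {c c' : ℕ} {h : c < r} {h' : c' < r} :
    vedge c h = vedge c' h' ↔ c = c' := by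
  simp only [vedge, Sym2.eq_iff, Prod.mk.injEq, Fin.mk.injEq]
  constructor
  · rintro (⟨⟨h1, -⟩, -⟩ | ⟨⟨-, h1⟩, -⟩)
    · exact h1
    · exact absurd h1 (by decide)
  · rintro rfl; left; simp

lemma hedge_ne_vedge {g c : ℕ} {h : g + 1 < r} {h' : c < r} {z : Fin 2} :
    hedge g h z ≠ vedge c h' := by
  intro he
  simp only [hedge, vedge, Sym2.eq_iff, Prod.mk.injEq, Fin.mk.injEq] at he
  rcases he with ⟨⟨-, h2⟩, -, h4⟩ | ⟨⟨-, h2⟩, -, h4⟩ <;>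
    exact absurd (h2.symm.trans h4) (by decide)


section Counting

variable {V : Type*} {G : SimpleGraph V}

/-- generic lower bound on the number of darts satisfying `P` in terms of a potential `f`. -/
lemma countP_lower (f : V → ℕ) (P : G.Dart → Bool)
    (hP : ∀ d : G.Dart, Nat.dist (f d.fst) (f d.snd) ≤ if P d then 1 else 0) :
    ∀ {u v : V} (p : G.Walk u v), Nat.dist (f u) (f v) ≤ p.darts.countP P := by
  intro u v p
  induction p with
  | nil => simp [Nat.dist_self]
  | @cons u w v h q ih =>
    rw [Walk.darts_cons, List.countP_cons]
    have htri := Nat.dist.triangle_inequality (f u) (f w) (f v)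
    have h1 : Nat.dist (f u) (f w) ≤ if P ⟨(u, w), h⟩ then 1 else 0 := hP ⟨(u, w), h⟩
    split_ifs at h1 ⊢ <;> omega

lemma countP_partition {α : Type*} (A B C : α → Bool)
    (h : ∀ x, (if A x then 1 else 0) + (if B x then 1 else 0) + (if C x then 1 else 0) = 1) :
    ∀ l : List α, l.countP A + l.countP B + l.countP C = l.length := by
  intro l
  induction l with
  | nil => simp
  | cons a t ih =>
    simp only [List.countP_cons, List.length_cons]
    have := h a
    split_ifs at this ⊢ <;> omega

lemma two_le_countP {α : Type*} (P : α → Bool) {a b : α} :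
    ∀ {l : List α}, a ∈ l → b ∈ l → a ≠ b → P a → P b → 2 ≤ l.countP P := by
  intro l
  induction l with
  | nil => simp
  | cons x t ih =>
    intro ha hb hab hPa hPb
    rcases List.mem_cons.mp ha with rfl | ha'
    · rcases List.mem_cons.mp hb with rfl | hb'
      · exact absurd rfl hab
      · rw [List.countP_cons, if_pos hPa]
        have : 0 < t.countP P := List.countP_pos_iff.mpr ⟨b, hb', hPb⟩
        omega
    · rcases List.mem_cons.mp hb with rfl | hb'
      · rw [List.countP_cons, if_pos hPb]
        have : 0 < t.countP P := List.countP_pos_iff.mpr ⟨a, ha', hPa⟩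
        omega
      · have := ih ha' hb' hab hPa hPb
        rw [List.countP_cons]
        split <;> omega

end Counting

/-- a dart is vertical -/
def Pv {r : ℕ} (d : (gridGraph r 2).Dart) : Bool := decide (d.fst.2 ≠ d.snd.2)

/-- a dart crosses the gap between columns 0 and 1 -/
def Pc {r : ℕ} (d : (gridGraph r 2).Dart) : Bool := decide (d.fst.1.val + d.snd.1.val = 1)

/-- a dart is horizontal but does not cross gap 0 -/
def Pcomp {r : ℕ} (d : (gridGraph r 2).Dart) : Bool :=
  decide (d.fst.1 ≠ d.snd.1 ∧ d.fst.1.val + d.snd.1.val ≠ 1)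

lemma dart_adj' (d : (gridGraph r 2).Dart) :
    ((d.fst.1.val + 1 = d.snd.1.val ∨ d.snd.1.val + 1 = d.fst.1.val) ∧ d.fst.2 = d.snd.2) ∨
    ((d.fst.2.val + 1 = d.snd.2.val ∨ d.snd.2.val + 1 = d.fst.2.val) ∧ d.fst.1 = d.snd.1) :=
  grid_adj.mp d.adj

lemma countPv_lower {u v : Fin r × Fin 2} (p : (gridGraph r 2).Walk u v) :
    Nat.dist u.2.val v.2.val ≤ p.darts.countP Pv := by
  refine countP_lower (fun w => w.2.val) Pv (fun d => ?_) p
  have h1 := d.fst.2.isLt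
  have h2 := d.snd.2.isLt
  by_cases h : d.fst.2 = d.snd.2
  · simp [Pv, h, Nat.dist_self]
  · have hPv : Pv d = true := by simp [Pv, h]
    simp only [hPv, if_true, Nat.dist]
    have : d.fst.2.val ≠ d.snd.2.val := fun he => h (Fin.ext he)
    omega

lemma countPc_lower {u v : Fin r × Fin 2} (p : (gridGraph r 2).Walk u v) :
    Nat.dist (min u.1.val 1) (min v.1.val 1) ≤ p.darts.countP Pc := by
  refine countP_lower (fun w => min w.1.val 1) Pc (fun d => ?_) p
  by_cases h : d.fst.1.val + d.snd.1.val = 1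
  · have hP : Pc d = true := by simp [Pc, h]
    simp only [hP, if_true, Nat.dist]
    omega
  · have hP : ¬ (Pc d = true) := by simp [Pc, h]
    simp only [hP, if_false, if_neg hP, Nat.dist]
    rcases dart_adj' d with ⟨h1, -⟩ | ⟨-, h1⟩
    · omega
    · rw [h1]; omega

lemma countPcomp_lower {u v : Fin r × Fin 2} (p : (gridGraph r 2).Walk u v) :
    Nat.dist (u.1.val - 1) (v.1.val - 1) ≤ p.darts.countP Pcomp := by
  refine countP_lower (fun w => w.1.val - 1) Pcomp (fun d => ?_) p
  by_cases h : d.fst.1 ≠ d.snd.1 ∧ d.fst.1.val + d.snd.1.val ≠ 1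
  · have hP : Pcomp d = true := by simp only [Pcomp, decide_eq_true_eq]; exact h
    simp only [hP, if_true, Nat.dist]
    rcases dart_adj' d with ⟨h1, -⟩ | ⟨-, h1⟩
    · omega
    · rw [h1]; omega
  · have hP : ¬ (Pcomp d = true) := by simp only [Pcomp, decide_eq_true_eq]; exact h
    simp only [if_neg hP, Nat.dist]
    rw [not_and_or, not_not, not_not] at h
    rcases h with h | h
    · rw [h]; omega
    · omega

lemma count_total {u v : Fin r × Fin 2} (p : (gridGraph r 2).Walk u v) :
    p.darts.countP Pv + p.darts.countP Pc + p.darts.countP Pcomp = p.length := by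
  rw [← Walk.length_darts]
  refine countP_partition Pv Pc Pcomp (fun d => ?_) p.darts
  have hv2 : d.fst.2.val < 2 := d.fst.2.isLt
  have hv2' : d.snd.2.val < 2 := d.snd.2.isLt
  rcases dart_adj' d with ⟨h1, h2⟩ | ⟨h1, h2⟩
  · have hne : d.fst.1 ≠ d.snd.1 := by
      intro he; rw [he] at h1; omega
    by_cases h : d.fst.1.val + d.snd.1.val = 1 <;>
      simp [Pv, Pc, Pcomp, h2, hne, h]
  · have hne : d.fst.2 ≠ d.snd.2 := by
      intro he; rw [he] at h1; omega
    have hsum : ¬ (d.fst.1.val + d.snd.1.val = 1) := by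
      rw [h2]; omega
    have hsum2 : ¬ (d.snd.1.val + d.snd.1.val = 1) := by omega
    simp [Pv, Pc, Pcomp, h2, hne, hsum, hsum2]


/-! ### Walk constructions -/

/-- horizontal walk from column `a` to column `a + k` in row `z` -/
def hwk (z : Fin 2) (a : ℕ) : (k : ℕ) → (h : a + k < r) →
    (gridGraph r 2).Walk (⟨a, by omega⟩, z) (⟨a + k, h⟩, z)
  | 0, _ => Walk.nil
  | k + 1, h =>
    Walk.concat (hwk z a k (by omega))
      (grid_adj.mpr (Or.inl ⟨Or.inl rfl, rfl⟩))

lemma hwk_length (z : Fin 2) (a : ℕ) : ∀ (k : ℕ) (h : a + k < r), (hwk z a k h).length = k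
  | 0, _ => rfl
  | k + 1, h => by
    rw [hwk, Walk.length_concat, hwk_length z a k]

lemma hwk_mem (z : Fin 2) (a : ℕ) : ∀ (k : ℕ) (hk : a + k < r) (g : ℕ)
    (hg1 : a ≤ g) (hg2 : g < a + k) (hgr : g + 1 < r),
    hedge g hgr z ∈ (hwk z a k hk).edges
  | 0, _, g, hg1, hg2, _ => absurd hg2 (by omega)
  | k + 1, hk, g, hg1, hg2, hgr => by
    rw [hwk, Walk.edges_concat, List.concat_eq_append, List.mem_append]
    rcases Nat.lt_or_ge g (a + k) with h | h
    · exact Or.inl (hwk_mem z a k (by omega) g hg1 h hgr)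
    · have hg : g = a + k := by omega
      subst hg
      right
      simp [hedge]
      omega

/-- horizontal walk from column `a` to column `b` in row `z` -/
def hw (z : Fin 2) (a b : ℕ) (hab : a ≤ b) (hb : b < r) :
    (gridGraph r 2).Walk (⟨a, by omega⟩, z) (⟨b, hb⟩, z) :=
  (hwk z a (b - a) (by omega)).copy rfl
    (by congr 1; exact Fin.ext (by simp; omega))

lemma hw_length (z : Fin 2) (a b : ℕ) (hab : a ≤ b) (hb : b < r) :
    (hw z a b hab hb).length = b - a := by
  rw [hw, Walk.length_copy, hwk_length]

lemma hw_mem (z : Fin 2) (a b : ℕ) (hab : a ≤ b) (hb : b < r) (g : ℕ)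
    (hg1 : a ≤ g) (hg2 : g < b) (hgr : g + 1 < r) :
    hedge g hgr z ∈ (hw z a b hab hb).edges := by
  rw [hw, Walk.edges_copy]
  exact hwk_mem z a (b - a) _ g hg1 (by omega) hgr

lemma other_row (x : Fin 2) : ∃ y : Fin 2, x ≠ y ∧ ∀ z : Fin 2, z = x ∨ z = y := by
  fin_cases x
  · exact ⟨1, by decide, by decide⟩
  · exact ⟨0, by decide, by decide⟩

lemma vadj {c : ℕ} (hc : c < r) {x y : Fin 2} (hxy : x ≠ y) :
    (gridGraph r 2).Adj (⟨c, hc⟩, x) (⟨c, hc⟩, y) := by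
  refine grid_adj.mpr (Or.inr ⟨?_, rfl⟩)
  dsimp only
  have h1 : x.val < 2 := x.isLt
  have h2 : y.val < 2 := y.isLt
  have : x.val ≠ y.val := fun he => hxy (Fin.ext he)
  omega

lemma vedge_eq_sym {c : ℕ} (hc : c < r) {x y : Fin 2} (hxy : x ≠ y) :
    s(((⟨c, hc⟩ : Fin r), x), (⟨c, hc⟩, y)) = vedge c hc := by
  have h1 : x.val < 2 := x.isLt
  have h2 : y.val < 2 := y.isLt
  have : x.val ≠ y.val := fun he => hxy (Fin.ext he)
  have hxy' : (x = 0 ∧ y = 1) ∨ (x = 1 ∧ y = 0) := by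
    rcases Nat.lt_or_ge x.val 1 with h | h
    · exact Or.inl ⟨Fin.ext (by omega), Fin.ext (by omega)⟩
    · exact Or.inr ⟨Fin.ext (by omega), Fin.ext (by omega)⟩
  rcases hxy' with ⟨rfl, rfl⟩ | ⟨rfl, rfl⟩
  · rfl
  · rw [vedge, Sym2.eq_swap]

/-- staircase walk: row `x` from `a` to `c`, vertical step at `c`, row `y` from `c` to `b`. -/
def stairW (x y : Fin 2) (hxy : x ≠ y) (a c b : ℕ) (hac : a ≤ c) (hcb : c ≤ b) (hb : b < r) :
    (gridGraph r 2).Walk (⟨a, by omega⟩, x) (⟨b, hb⟩, y) :=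
  (hw x a c hac (by omega)).append
    ((Walk.cons (vadj (by omega) hxy) Walk.nil).append (hw y c b hcb hb))

lemma stairW_length (x y : Fin 2) (hxy : x ≠ y) (a c b : ℕ) (hac : a ≤ c) (hcb : c ≤ b)
    (hb : b < r) : (stairW x y hxy a c b hac hcb hb).length = (b - a) + 1 := by
  rw [stairW, Walk.length_append, Walk.length_append, hw_length, hw_length]
  simp; omega

lemma stairW_mem_left (x y : Fin 2) (hxy : x ≠ y) (a c b : ℕ) (hac : a ≤ c) (hcb : c ≤ b)
    (hb : b < r) (g : ℕ) (hg1 : a ≤ g) (hg2 : g < c) (hgr : g + 1 < r) :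
    hedge g hgr x ∈ (stairW x y hxy a c b hac hcb hb).edges := by
  rw [stairW, Walk.edges_append, List.mem_append]
  exact Or.inl (hw_mem x a c hac (by omega) g hg1 hg2 hgr)

lemma stairW_mem_right (x y : Fin 2) (hxy : x ≠ y) (a c b : ℕ) (hac : a ≤ c) (hcb : c ≤ b)
    (hb : b < r) (g : ℕ) (hg1 : c ≤ g) (hg2 : g < b) (hgr : g + 1 < r) :
    hedge g hgr y ∈ (stairW x y hxy a c b hac hcb hb).edges := by
  rw [stairW, Walk.edges_append, Walk.edges_append, List.mem_append, List.mem_append]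
  exact Or.inr (Or.inr (hw_mem y c b hcb hb g hg1 hg2 hgr))

lemma stairW_mem_vert (x y : Fin 2) (hxy : x ≠ y) (a c b : ℕ) (hac : a ≤ c) (hcb : c ≤ b)
    (hb : b < r) :
    vedge c (by omega) ∈ (stairW x y hxy a c b hac hcb hb).edges := by
  rw [stairW, Walk.edges_append, Walk.edges_append, List.mem_append, List.mem_append]
  refine Or.inr (Or.inl ?_)
  rw [Walk.edges_cons, Walk.edges_nil]
  exact List.mem_singleton.mpr (vedge_eq_sym _ hxy).symm


/-! ### Distance formula and geodesic facts -/

lemma dist_split (a b : ℕ) :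
    Nat.dist a b = Nat.dist (min a 1) (min b 1) + Nat.dist (a - 1) (b - 1) := by
  simp [Nat.dist]; omega

lemma walk_length_lower {u v : Fin r × Fin 2} (p : (gridGraph r 2).Walk u v) :
    Nat.dist u.1.val v.1.val + Nat.dist u.2.val v.2.val ≤ p.length := by
  have hv := countPv_lower p
  have hc := countPc_lower p
  have hh := countPcomp_lower p
  have ht := count_total p
  have hs := dist_split u.1.val v.1.val
  omega

lemma exists_walk_formula (u v : Fin r × Fin 2) :
    ∃ p : (gridGraph r 2).Walk u v,
      p.length = Nat.dist u.1.val v.1.val + Nat.dist u.2.val v.2.val := by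
  have key : ∀ (u v : Fin r × Fin 2), u.1.val ≤ v.1.val →
      ∃ p : (gridGraph r 2).Walk u v,
        p.length = Nat.dist u.1.val v.1.val + Nat.dist u.2.val v.2.val := by
    rintro ⟨⟨u1, hu1⟩, x⟩ ⟨⟨v1, hv1⟩, y⟩ hle
    simp only at hle
    by_cases hxy : x = y
    · subst hxy
      refine ⟨hw x u1 v1 hle hv1, ?_⟩
      rw [hw_length]
      simp [Nat.dist]
      omega
    · refine ⟨stairW x y hxy u1 u1 v1 le_rfl hle hv1, ?_⟩
      rw [stairW_length]
      have h1 : x.val < 2 := x.isLt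
      have h2 : y.val < 2 := y.isLt
      have h3 : x.val ≠ y.val := fun he => hxy (Fin.ext he)
      simp [Nat.dist]
      omega
  rcases le_total u.1.val v.1.val with h | h
  · exact key u v h
  · obtain ⟨p, hp⟩ := key v u h
    exact ⟨p.reverse, by rw [Walk.length_reverse, hp, Nat.dist_comm, Nat.dist_comm v.2.val]⟩

lemma dist_formula (u v : Fin r × Fin 2) :
    (gridGraph r 2).dist u v = Nat.dist u.1.val v.1.val + Nat.dist u.2.val v.2.val := by
  obtain ⟨p, hp⟩ := exists_walk_formula u v
  have hub := SimpleGraph.dist_le p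
  obtain ⟨q, hq⟩ := (Walk.reachable p).exists_walk_length_eq_dist
  have hlb := walk_length_lower q
  omega

lemma isGeodesic_of_length (u v : Fin r × Fin 2) (p : (gridGraph r 2).Walk u v)
    (hl : p.length = Nat.dist u.1.val v.1.val + Nat.dist u.2.val v.2.val) :
    IsGeodesic (gridGraph r 2) p := by
  rw [IsGeodesic, hl, dist_formula]

lemma geo_counts {u v : Fin r × Fin 2} {p : (gridGraph r 2).Walk u v}
    (hp : IsGeodesic (gridGraph r 2) p) :
    p.darts.countP Pv ≤ 1 ∧ p.darts.countP Pc ≤ 1 := by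
  have ht := count_total p
  have hv := countPv_lower p
  have hc := countPc_lower p
  have hh := countPcomp_lower p
  have hd : p.length = Nat.dist u.1.val v.1.val + Nat.dist u.2.val v.2.val :=
    hp.trans (dist_formula u v)
  have hs := dist_split u.1.val v.1.val
  have b1 : Nat.dist u.2.val v.2.val ≤ 1 := by
    have := u.2.isLt; have := v.2.isLt
    simp [Nat.dist]; omega
  have b2 : Nat.dist (min u.1.val 1) (min v.1.val 1) ≤ 1 := by
    simp [Nat.dist]; omega
  omega

lemma exists_dart_of_mem_edges {u v : Fin r × Fin 2} {p : (gridGraph r 2).Walk u v}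
    {e : Sym2 (Fin r × Fin 2)} (he : e ∈ p.edges) :
    ∃ d ∈ p.darts, d.edge = e := by
  have h : p.edges = p.darts.map SimpleGraph.Dart.edge := rfl
  rw [h] at he
  exact List.mem_map.mp he

lemma dart_edge_eq {d : (gridGraph r 2).Dart} : d.edge = s(d.fst, d.snd) := rfl

lemma dart_of_vedge {d : (gridGraph r 2).Dart} {c : ℕ} {hc : c < r}
    (h : d.edge = vedge c hc) : Pv d = true := by
  rw [dart_edge_eq, vedge, Sym2.eq_iff] at h
  rw [Pv, decide_eq_true_eq]
  rcases h with ⟨h1, h2⟩ | ⟨h1, h2⟩ <;> rw [h1, h2] <;> simp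

lemma dart_of_hedge0 {d : (gridGraph r 2).Dart} {z : Fin 2} {h0 : 0 + 1 < r}
    (h : d.edge = hedge 0 h0 z) : Pc d = true := by
  rw [dart_edge_eq, hedge, Sym2.eq_iff] at h
  rw [Pc, decide_eq_true_eq]
  rcases h with ⟨h1, h2⟩ | ⟨h1, h2⟩ <;> rw [h1, h2] <;> rfl

lemma geo_vert_unique {u v : Fin r × Fin 2} {p : (gridGraph r 2).Walk u v}
    (hp : IsGeodesic (gridGraph r 2) p) {c c' : ℕ} {hc : c < r} {hc' : c' < r}
    (h1 : vedge c hc ∈ p.edges) (h2 : vedge c' hc' ∈ p.edges) : c = c' := by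
  by_contra hne
  obtain ⟨d1, hd1, he1⟩ := exists_dart_of_mem_edges h1
  obtain ⟨d2, hd2, he2⟩ := exists_dart_of_mem_edges h2
  have hdd : d1 ≠ d2 := by
    intro he; rw [he, he2] at he1
    exact hne (vedge_eq_iff.mp he1.symm)
  have := two_le_countP Pv hd1 hd2 hdd (dart_of_vedge he1) (dart_of_vedge he2)
  have := (geo_counts hp).1
  omega

lemma geo_not_both_cross {u v : Fin r × Fin 2} {p : (gridGraph r 2).Walk u v}
    (hp : IsGeodesic (gridGraph r 2) p) {z z' : Fin 2} {h0 : 0 + 1 < r} {h0' : 0 + 1 < r}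
    (hzz : z ≠ z')
    (h1 : hedge 0 h0 z ∈ p.edges) (h2 : hedge 0 h0' z' ∈ p.edges) : False := by
  obtain ⟨d1, hd1, he1⟩ := exists_dart_of_mem_edges h1
  obtain ⟨d2, hd2, he2⟩ := exists_dart_of_mem_edges h2
  have hdd : d1 ≠ d2 := by
    intro he; rw [he, he2] at he1
    exact hzz (hedge_eq_iff.mp he1.symm).2.symm.symm
  have := two_le_countP Pc hd1 hd2 hdd (dart_of_hedge0 he1) (dart_of_hedge0 he2)
  have := (geo_counts hp).2
  omega


/-! ### Geodesics realizing configurations -/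

lemma hw_geodesic (z : Fin 2) (a b : ℕ) (hab : a ≤ b) (hb : b < r) :
    IsGeodesic (gridGraph r 2) (hw z a b hab hb) := by
  refine isGeodesic_of_length _ _ _ ?_
  rw [hw_length]
  simp [Nat.dist]
  omega

lemma stairW_geodesic (x y : Fin 2) (hxy : x ≠ y) (a c b : ℕ) (hac : a ≤ c) (hcb : c ≤ b)
    (hb : b < r) : IsGeodesic (gridGraph r 2) (stairW x y hxy a c b hac hcb hb) := by
  refine isGeodesic_of_length _ _ _ ?_
  rw [stairW_length]
  have h1 : x.val < 2 := x.isLt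
  have h2 : y.val < 2 := y.isLt
  have h3 : x.val ≠ y.val := fun he => hxy (Fin.ext he)
  simp [Nat.dist]
  omega

variable {S : Set (Sym2 (Fin r × Fin 2))}

/-- two horizontal edges in the same row plus a vertical edge outside them. -/
lemma lemA (hS : IsEdgeGPSet (gridGraph r 2) S) {g g' c : ℕ} {z : Fin 2}
    (hg : g + 1 < r) (hg' : g' + 1 < r) (hc : c < r) (hgg' : g < g')
    (hcase : c ≤ g ∨ g' + 1 ≤ c)
    (m1 : hedge g hg z ∈ S) (m2 : hedge g' hg' z ∈ S) (m3 : vedge c hc ∈ S) : False := by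
  obtain ⟨w, hzw, -⟩ := other_row z
  rcases hcase with hcg | hcg
  · have h := hS.2 (stairW w z (Ne.symm hzw) c c (g' + 1) le_rfl (by omega) hg')
      (stairW_geodesic _ _ _ _ _ _ _ _ _) _ m1 _ m2 _ m3
      (stairW_mem_right _ _ _ _ _ _ _ _ _ g hcg (by omega) hg)
      (stairW_mem_right _ _ _ _ _ _ _ _ _ g' (by omega) (by omega) hg')
      (stairW_mem_vert _ _ _ _ _ _ _ _ _)
    rcases h with h | h | h
    · exact absurd (hedge_eq_iff.mp h).1 (by omega)
    · exact hedge_ne_vedge h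
    · exact hedge_ne_vedge h
  · have h := hS.2 (stairW z w hzw g c c (by omega) le_rfl (by omega))
      (stairW_geodesic _ _ _ _ _ _ _ _ _) _ m1 _ m2 _ m3
      (stairW_mem_left _ _ _ _ _ _ _ _ _ g le_rfl (by omega) hg)
      (stairW_mem_left _ _ _ _ _ _ _ _ _ g' (by omega) (by omega) hg')
      (stairW_mem_vert _ _ _ _ _ _ _ _ _)
    rcases h with h | h | h
    · exact absurd (hedge_eq_iff.mp h).1 (by omega)
    · exact hedge_ne_vedge h
    · exact hedge_ne_vedge h

/-- two horizontal edges in different rows plus a vertical edge between them. -/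
lemma lemB (hS : IsEdgeGPSet (gridGraph r 2) S) {g g' c : ℕ} {z z' : Fin 2}
    (hg : g + 1 < r) (hg' : g' + 1 < r) (hc : c < r) (hgg' : g < g') (hzz : z ≠ z')
    (hc1 : g < c) (hc2 : c ≤ g')
    (m1 : hedge g hg z ∈ S) (m2 : hedge g' hg' z' ∈ S) (m3 : vedge c hc ∈ S) : False := by
  have h := hS.2 (stairW z z' hzz g c (g' + 1) (by omega) (by omega) hg')
    (stairW_geodesic _ _ _ _ _ _ _ _ _) _ m1 _ m2 _ m3
    (stairW_mem_left _ _ _ _ _ _ _ _ _ g le_rfl (by omega) hg)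
    (stairW_mem_right _ _ _ _ _ _ _ _ _ g' (by omega) (by omega) hg')
    (stairW_mem_vert _ _ _ _ _ _ _ _ _)
  rcases h with h | h | h
  · exact hzz (hedge_eq_iff.mp h).2
  · exact hedge_ne_vedge h
  · exact hedge_ne_vedge h

/-- three horizontal edges whose row pattern has at most one switch. -/
lemma lemC (hS : IsEdgeGPSet (gridGraph r 2) S) {g1 g2 g3 : ℕ} {z1 z2 z3 : Fin 2}
    (h1 : g1 + 1 < r) (h2 : g2 + 1 < r) (h3 : g3 + 1 < r)
    (h12 : g1 < g2) (h23 : g2 < g3) (hpat : z1 = z2 ∨ z2 = z3)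
    (m1 : hedge g1 h1 z1 ∈ S) (m2 : hedge g2 h2 z2 ∈ S) (m3 : hedge g3 h3 z3 ∈ S) :
    False := by
  have kill : ∀ {u v : Fin r × Fin 2} (p : (gridGraph r 2).Walk u v),
      IsGeodesic (gridGraph r 2) p →
      hedge g1 h1 z1 ∈ p.edges → hedge g2 h2 z2 ∈ p.edges → hedge g3 h3 z3 ∈ p.edges →
      False := by
    intro u v p hp e1 e2 e3
    rcases hS.2 p hp _ m1 _ m2 _ m3 e1 e2 e3 with h | h | h <;>
      exact absurd (hedge_eq_iff.mp h).1 (by omega)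
  rcases hpat with rfl | rfl
  · by_cases hz : z1 = z3
    · subst hz
      exact kill (hw z1 g1 (g3 + 1) (by omega) h3) (hw_geodesic _ _ _ _ _)
        (hw_mem _ _ _ _ _ g1 le_rfl (by omega) h1)
        (hw_mem _ _ _ _ _ g2 (by omega) (by omega) h2)
        (hw_mem _ _ _ _ _ g3 (by omega) (by omega) h3)
    · exact kill (stairW z1 z3 hz g1 g3 (g3 + 1) (by omega) (by omega) h3)
        (stairW_geodesic _ _ _ _ _ _ _ _ _)
        (stairW_mem_left _ _ _ _ _ _ _ _ _ g1 le_rfl (by omega) h1)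
        (stairW_mem_left _ _ _ _ _ _ _ _ _ g2 (by omega) (by omega) h2)
        (stairW_mem_right _ _ _ _ _ _ _ _ _ g3 le_rfl (by omega) h3)
  · by_cases hz : z1 = z2
    · subst hz
      exact kill (hw z1 g1 (g3 + 1) (by omega) h3) (hw_geodesic _ _ _ _ _)
        (hw_mem _ _ _ _ _ g1 le_rfl (by omega) h1)
        (hw_mem _ _ _ _ _ g2 (by omega) (by omega) h2)
        (hw_mem _ _ _ _ _ g3 (by omega) (by omega) h3)
    · exact kill (stairW z1 z2 hz g1 g2 (g3 + 1) (by omega) (by omega) h3)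
        (stairW_geodesic _ _ _ _ _ _ _ _ _)
        (stairW_mem_left _ _ _ _ _ _ _ _ _ g1 le_rfl (by omega) h1)
        (stairW_mem_right _ _ _ _ _ _ _ _ _ g2 le_rfl (by omega) h2)
        (stairW_mem_right _ _ _ _ _ _ _ _ _ g3 (by omega) (by omega) h3)


lemma fin2_resolve {a b c : Fin 2} (h1 : a ≠ b) (h2 : b ≠ c) : a = c := by
  have ha := a.isLt
  have hb := b.isLt
  have hc := c.isLt
  have n1 : a.val ≠ b.val := fun he => h1 (Fin.ext he)
  have n2 : b.val ≠ c.val := fun he => h2 (Fin.ext he)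
  exact Fin.ext (by omega)

/-- sorted version: a vertical edge plus three distinct horizontal edges is impossible. -/
lemma u3' (hS : IsEdgeGPSet (gridGraph r 2) S) {g1 g2 g3 c : ℕ}
    {hb1 : g1 + 1 < r} {hb2 : g2 + 1 < r} {hb3 : g3 + 1 < r} {hc : c < r}
    {z1 z2 z3 : Fin 2}
    (hg12 : g1 ≤ g2) (hg23 : g2 ≤ g3)
    (d12 : ¬(g1 = g2 ∧ z1 = z2)) (d13 : ¬(g1 = g3 ∧ z1 = z3)) (d23 : ¬(g2 = g3 ∧ z2 = z3))
    (m1 : hedge g1 hb1 z1 ∈ S) (m2 : hedge g2 hb2 z2 ∈ S) (m3 : hedge g3 hb3 z3 ∈ S)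
    (mv : vedge c hc ∈ S) : False := by
  rcases eq_or_lt_of_le hg12 with rfl | h12
  · -- g1 = g2, both rows present at gap g1
    have hz12 : z1 ≠ z2 := fun he => d12 ⟨rfl, he⟩
    rcases eq_or_lt_of_le hg23 with rfl | h23
    · -- all three gaps equal: three distinct rows in Fin 2, impossible
      have hz13 : z1 ≠ z3 := fun he => d13 ⟨rfl, he⟩
      have hz23 : z2 ≠ z3 := fun he => d23 ⟨rfl, he⟩
      exact hz13 (fin2_resolve hz12 hz23)
    · -- gap g1 (both rows) and gap g3
      have hrows : (z1 = z3 ∧ z2 ≠ z3) ∨ (z2 = z3 ∧ z1 ≠ z3) := by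
        by_cases h : z1 = z3
        · exact Or.inl ⟨h, fun he => hz12 (h.trans he.symm)⟩
        · exact Or.inr ⟨fin2_resolve (Ne.symm hz12) h, h⟩
      rcases hrows with ⟨he, hne⟩ | ⟨he, hne⟩
      · subst he
        rcases Nat.lt_or_ge g1 c with h | h
        · rcases Nat.lt_or_ge g3 c with h' | h'
          · exact lemA hS hb1 hb3 hc h23 (Or.inr (by omega)) m1 m3 mv
          · exact lemB hS hb2 hb3 hc h23 hne (by omega) (by omega) m2 m3 mv
        · exact lemA hS hb1 hb3 hc h23 (Or.inl (by omega)) m1 m3 mv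
      · subst he
        rcases Nat.lt_or_ge g1 c with h | h
        · rcases Nat.lt_or_ge g3 c with h' | h'
          · exact lemA hS hb2 hb3 hc h23 (Or.inr (by omega)) m2 m3 mv
          · exact lemB hS hb1 hb3 hc h23 hne (by omega) (by omega) m1 m3 mv
        · exact lemA hS hb2 hb3 hc h23 (Or.inl (by omega)) m2 m3 mv
  · rcases eq_or_lt_of_le hg23 with rfl | h23
    · -- gap g1 and gap g2 (both rows)
      have hz23 : z2 ≠ z3 := fun he => d23 ⟨rfl, he⟩
      have hrows : (z2 = z1 ∧ z3 ≠ z1) ∨ (z3 = z1 ∧ z2 ≠ z1) := by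
        by_cases h : z2 = z1
        · exact Or.inl ⟨h, fun he => hz23 (h.trans he.symm)⟩
        · exact Or.inr ⟨fin2_resolve (Ne.symm hz23) h, h⟩
      rcases hrows with ⟨he, hne⟩ | ⟨he, hne⟩
      · subst he
        rcases Nat.lt_or_ge g1 c with h | h
        · rcases Nat.lt_or_ge g2 c with h' | h'
          · exact lemA hS hb1 hb2 hc h12 (Or.inr (by omega)) m1 m2 mv
          · exact lemB hS hb1 hb3 hc h12 (Ne.symm hne) (by omega) (by omega) m1 m3 mv
        · exact lemA hS hb1 hb2 hc h12 (Or.inl (by omega)) m1 m2 mv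
      · subst he
        rcases Nat.lt_or_ge g1 c with h | h
        · rcases Nat.lt_or_ge g2 c with h' | h'
          · exact lemA hS hb1 hb3 hc h12 (Or.inr (by omega)) m1 m3 mv
          · exact lemB hS hb1 hb2 hc h12 (Ne.symm hne) (by omega) (by omega) m1 m2 mv
        · exact lemA hS hb1 hb3 hc h12 (Or.inl (by omega)) m1 m3 mv
    · -- all gaps distinct
      by_cases hpat : z1 = z2 ∨ z2 = z3
      · exact lemC hS hb1 hb2 hb3 h12 h23 hpat m1 m2 m3
      · push_neg at hpat
        obtain ⟨hz12, hz23⟩ := hpat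
        have hz13 : z1 = z3 := fin2_resolve hz12 hz23
        subst hz13
        rcases Nat.lt_or_ge g1 c with h | h
        · rcases Nat.lt_or_ge g2 c with h' | h'
          · rcases Nat.lt_or_ge g3 c with h'' | h''
            · exact lemA hS hb1 hb3 hc (by omega) (Or.inr (by omega)) m1 m3 mv
            · exact lemB hS hb2 hb3 hc h23 hz23 (by omega) (by omega) m2 m3 mv
          · exact lemB hS hb1 hb2 hc h12 hz12 (by omega) (by omega) m1 m2 mv
        · exact lemA hS hb1 hb3 hc (by omega) (Or.inl (by omega)) m1 m3 mv

/-- a vertical edge plus three distinct horizontal edges in `S` is impossible. -/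
lemma u3 (hS : IsEdgeGPSet (gridGraph r 2) S) {g1 g2 g3 c : ℕ}
    {hb1 : g1 + 1 < r} {hb2 : g2 + 1 < r} {hb3 : g3 + 1 < r} {hc : c < r}
    {z1 z2 z3 : Fin 2}
    (d12 : ¬(g1 = g2 ∧ z1 = z2)) (d13 : ¬(g1 = g3 ∧ z1 = z3)) (d23 : ¬(g2 = g3 ∧ z2 = z3))
    (m1 : hedge g1 hb1 z1 ∈ S) (m2 : hedge g2 hb2 z2 ∈ S) (m3 : hedge g3 hb3 z3 ∈ S)
    (mv : vedge c hc ∈ S) : False := by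
  have sy : ∀ {a b : ℕ} {x y : Fin 2}, ¬(a = b ∧ x = y) → ¬(b = a ∧ y = x) :=
    fun h ⟨h1, h2⟩ => h ⟨h1.symm, h2.symm⟩
  rcases le_total g1 g2 with h12 | h12
  · rcases le_total g2 g3 with h23 | h23
    · exact u3' hS h12 h23 d12 d13 d23 m1 m2 m3 mv
    · rcases le_total g1 g3 with h13 | h13
      · exact u3' hS h13 h23 d13 d12 (sy d23) m1 m3 m2 mv
      · exact u3' hS h13 h12 (sy d13) (sy d23) d12 m3 m1 m2 mv
  · rcases le_total g1 g3 with h13 | h13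
    · exact u3' hS h12 h13 (sy d12) d23 d13 m2 m1 m3 mv
    · rcases le_total g2 g3 with h23 | h23
      · exact u3' hS h23 h13 d23 (sy d12) (sy d13) m2 m3 m1 mv
      · exact u3' hS h23 h12 (sy d23) (sy d13) (sy d12) m3 m2 m1 mv


/-! ### Classification and counting -/

lemma edge_class {e : Sym2 (Fin r × Fin 2)} (he : e ∈ (gridGraph r 2).edgeSet) :
    (∃ g hg z, e = hedge g hg z) ∨ (∃ c hc, e = vedge c hc) := by
  induction e with
  | _ u v =>
    rw [mem_edgeSet, grid_adj] at he
    have hu1 := u.1.isLt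
    have hv1 := v.1.isLt
    have hu2 := u.2.isLt
    have hv2 := v.2.isLt
    rcases he with ⟨h1 | h1, h2⟩ | ⟨h1, h2⟩
    · left
      refine ⟨u.1.val, by omega, u.2, ?_⟩
      have hv : v = ((⟨u.1.val + 1, by omega⟩ : Fin r), u.2) :=
        Prod.ext (Fin.ext h1.symm) h2.symm
      rw [hedge]
      exact congrArg (fun w => s(u, w)) hv
    · left
      refine ⟨v.1.val, by omega, v.2, ?_⟩
      have hu : u = ((⟨v.1.val + 1, by omega⟩ : Fin r), v.2) :=
        Prod.ext (Fin.ext h1.symm) h2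
      rw [hedge, Sym2.eq_swap]
      exact congrArg (fun w => s(v, w)) hu
    · right
      refine ⟨u.1.val, u.1.isLt, ?_⟩
      have hval : v.1.val = u.1.val := congrArg Fin.val h2.symm
      rcases h1 with h1 | h1
      · have hu : u = ((⟨u.1.val, u.1.isLt⟩ : Fin r), (0 : Fin 2)) :=
          Prod.ext rfl (Fin.ext (by simp; omega))
        have hv : v = ((⟨u.1.val, u.1.isLt⟩ : Fin r), (1 : Fin 2)) :=
          Prod.ext (Fin.ext (by simp; omega)) (Fin.ext (by simp; omega))
        rw [vedge]
        exact congrArg₂ (fun a b => s(a, b)) hu hv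
      · have hu : u = ((⟨u.1.val, u.1.isLt⟩ : Fin r), (1 : Fin 2)) :=
          Prod.ext rfl (Fin.ext (by simp; omega))
        have hv : v = ((⟨u.1.val, u.1.isLt⟩ : Fin r), (0 : Fin 2)) :=
          Prod.ext (Fin.ext (by simp; omega)) (Fin.ext (by simp; omega))
        rw [vedge, Sym2.eq_swap]
        exact congrArg₂ (fun a b => s(a, b)) hv hu

lemma three_distinct {α : Type*} {T : Set α} (h : 3 ≤ T.ncard) :
    ∃ a b c, a ∈ T ∧ b ∈ T ∧ c ∈ T ∧ a ≠ b ∧ a ≠ c ∧ b ≠ c := by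
  obtain ⟨T', hsub, hcard⟩ := Set.exists_subset_card_eq (s := T) h
  obtain ⟨a, b, c, hab, hac, hbc, rfl⟩ := Set.ncard_eq_three.mp hcard
  exact ⟨a, b, c, hsub (by simp), hsub (by simp), hsub (by simp), hab, hac, hbc⟩

/-- three distinct horizontal edges in the same row are impossible. -/
lemma row_bound (hS : IsEdgeGPSet (gridGraph r 2) S) {ga gb gc : ℕ}
    {ha : ga + 1 < r} {hb : gb + 1 < r} {hc : gc + 1 < r} {z : Fin 2}
    (hab : ga ≠ gb) (hac : ga ≠ gc) (hbc : gb ≠ gc)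
    (ma : hedge ga ha z ∈ S) (mb : hedge gb hb z ∈ S) (mc : hedge gc hc z ∈ S) : False := by
  rcases lt_trichotomy ga gb with h1 | h1 | h1
  · rcases lt_trichotomy gb gc with h2 | h2 | h2
    · exact lemC hS ha hb hc h1 h2 (Or.inl rfl) ma mb mc
    · exact hbc h2
    · rcases lt_trichotomy ga gc with h3 | h3 | h3
      · exact lemC hS ha hc hb h3 (by omega) (Or.inl rfl) ma mc mb
      · exact hac h3
      · exact lemC hS hc ha hb (by omega) (by omega) (Or.inl rfl) mc ma mb
  · exact hab h1
  · rcases lt_trichotomy ga gc with h2 | h2 | h2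
    · exact lemC hS hb ha hc (by omega) (by omega) (Or.inl rfl) mb ma mc
    · exact hac h2
    · rcases lt_trichotomy gb gc with h3 | h3 | h3
      · exact lemC hS hb hc ha (by omega) (by omega) (Or.inl rfl) mb mc ma
      · exact hbc h3
      · exact lemC hS hc hb ha (by omega) (by omega) (Or.inl rfl) mc mb ma


/-! ### The optimal construction -/

/-- all vertical edges -/
def VSet (r : ℕ) : Set (Sym2 (Fin r × Fin 2)) :=
  Set.range fun i : Fin r => vedge i.val i.isLt

lemma VSet_ncard : (VSet r).ncard = r := by
  have hinj : Function.Injective fun i : Fin r => vedge i.val i.isLt := by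
    intro i j h
    exact Fin.ext (vedge_eq_iff.mp h)
  rw [VSet, ← Set.image_univ, Set.ncard_image_of_injective _ hinj, Set.ncard_univ]
  simp

/-- the optimal edge general position set -/
def Sopt (r : ℕ) (hr : 2 ≤ r) : Set (Sym2 (Fin r × Fin 2)) :=
  insert (hedge 0 (by omega) 0) (insert (hedge 0 (by omega) 1) (VSet r))

lemma Sopt_ncard (hr : 2 ≤ r) : (Sopt r hr).ncard = r + 2 := by
  have h1 : (hedge 0 (by omega : 0 + 1 < r) (1 : Fin 2)) ∉ VSet r := by
    rintro ⟨i, hi⟩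
    exact hedge_ne_vedge hi.symm
  have h0 : (hedge 0 (by omega : 0 + 1 < r) (0 : Fin 2)) ∉
      insert (hedge 0 (by omega) 1) (VSet r) := by
    rintro (h | ⟨i, hi⟩)
    · exact absurd (hedge_eq_iff.mp h).2 (by decide)
    · exact hedge_ne_vedge hi.symm
  rw [Sopt, Set.ncard_insert_of_notMem h0, Set.ncard_insert_of_notMem h1, VSet_ncard]

lemma Sopt_gp (hr : 2 ≤ r) : IsEdgeGPSet (gridGraph r 2) (Sopt r hr) := by
  constructor
  · rintro e (rfl | rfl | ⟨i, rfl⟩)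
    · exact hedge_mem_edgeSet _ _ _
    · exact hedge_mem_edgeSet _ _ _
    · exact vedge_mem_edgeSet _ _
  · intro u v p hp e1 he1 e2 he2 e3 he3 hp1 hp2 hp3
    simp only [Sopt, Set.mem_insert_iff, VSet, Set.mem_range] at he1 he2 he3
    rcases he1 with rfl | rfl | ⟨i, rfl⟩ <;>
      rcases he2 with rfl | rfl | ⟨j, rfl⟩ <;>
        rcases he3 with rfl | rfl | ⟨k, rfl⟩ <;>
    first
      | (left; rfl)
      | (right; left; rfl)
      | (right; right; rfl)
      | (left; exact vedge_eq_iff.mpr (geo_vert_unique hp hp1 hp2))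
      | (right; left; exact vedge_eq_iff.mpr (geo_vert_unique hp hp1 hp3))
      | (right; right; exact vedge_eq_iff.mpr (geo_vert_unique hp hp2 hp3))
      | (exact (geo_not_both_cross hp (by decide : (0 : Fin 2) ≠ 1) hp1 hp2).elim)
      | (exact (geo_not_both_cross hp (by decide : (0 : Fin 2) ≠ 1) hp1 hp3).elim)
      | (exact (geo_not_both_cross hp (by decide : (0 : Fin 2) ≠ 1) hp2 hp3).elim)
      | (exact (geo_not_both_cross hp (by decide : (1 : Fin 2) ≠ 0) hp1 hp2).elim)
      | (exact (geo_not_both_cross hp (by decide : (1 : Fin 2) ≠ 0) hp1 hp3).elim)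
      | (exact (geo_not_both_cross hp (by decide : (1 : Fin 2) ≠ 0) hp2 hp3).elim)

/-! ### The upper bound -/

lemma upper_bound (hr : 2 ≤ r) (hS : IsEdgeGPSet (gridGraph r 2) S) :
    S.ncard ≤ r + 2 := by
  classical
  set SV := {e | e ∈ S ∧ ∃ c hc, e = vedge c hc} with hSVdef
  set SH := {e | e ∈ S ∧ ∃ g, ∃ hg : g + 1 < r, ∃ z : Fin 2, e = hedge g hg z} with hSHdef
  have hsub : S ⊆ SV ∪ SH := by
    intro e he
    rcases edge_class (hS.1 he) with ⟨g, hg, z, rfl⟩ | ⟨c, hc, rfl⟩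
    · exact Or.inr ⟨he, g, hg, z, rfl⟩
    · exact Or.inl ⟨he, c, hc, rfl⟩
  have hcard : S.ncard ≤ SV.ncard + SH.ncard :=
    le_trans (Set.ncard_le_ncard hsub (Set.toFinite _)) (Set.ncard_union_le _ _)
  have hSV_le : SV.ncard ≤ r := by
    have : SV ⊆ Set.range fun i : Fin r => vedge i.val i.isLt := by
      rintro e ⟨-, c, hc, rfl⟩
      exact ⟨⟨c, hc⟩, rfl⟩
    calc SV.ncard ≤ (VSet r).ncard := Set.ncard_le_ncard this (Set.toFinite _)
      _ = r := VSet_ncard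
  -- per-row bound
  have hrow : ∀ z : Fin 2, {e | e ∈ S ∧ ∃ g hg, e = hedge g hg z}.ncard ≤ 2 := by
    intro z
    by_contra hlt
    push_neg at hlt
    obtain ⟨a, b, c, ⟨ha, g1, hg1, rfl⟩, ⟨hb, g2, hg2, rfl⟩, ⟨hc, g3, hg3, rfl⟩,
      hab, hac, hbc⟩ := three_distinct hlt
    have d12 : g1 ≠ g2 := fun h => hab (hedge_eq_iff.mpr ⟨h, rfl⟩)
    have d13 : g1 ≠ g3 := fun h => hac (hedge_eq_iff.mpr ⟨h, rfl⟩)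
    have d23 : g2 ≠ g3 := fun h => hbc (hedge_eq_iff.mpr ⟨h, rfl⟩)
    exact row_bound hS d12 d13 d23 ha hb hc
  have hSH_sub : SH ⊆ {e | e ∈ S ∧ ∃ g hg, e = hedge g hg 0} ∪
      {e | e ∈ S ∧ ∃ g hg, e = hedge g hg 1} := by
    rintro e ⟨he, g, hg, z, rfl⟩
    have hz := z.isLt
    rcases Nat.lt_or_ge z.val 1 with h | h
    · have : z = 0 := Fin.ext (by omega)
      subst this
      exact Or.inl ⟨he, g, hg, rfl⟩
    · have : z = 1 := Fin.ext (by omega)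
      subst this
      exact Or.inr ⟨he, g, hg, rfl⟩
  have hSH_le : SH.ncard ≤ 4 := by
    calc SH.ncard ≤ _ := Set.ncard_le_ncard hSH_sub (Set.toFinite _)
      _ ≤ _ := Set.ncard_union_le _ _
      _ ≤ 2 + 2 := add_le_add (hrow 0) (hrow 1)
  rcases Set.eq_empty_or_nonempty SV with hemp | ⟨e, hem, c, hc, rfl⟩
  · rw [hemp] at hcard
    simp at hcard
    omega
  · -- a vertical edge exists; then SH has at most 2 elements
    have hSH2 : SH.ncard ≤ 2 := by
      by_contra hlt
      push_neg at hlt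
      obtain ⟨a, b, c', ⟨ha, g1, hg1, z1, rfl⟩, ⟨hb, g2, hg2, z2, rfl⟩,
        ⟨hc', g3, hg3, z3, rfl⟩, hab, hac, hbc⟩ := three_distinct hlt
      have d12 : ¬(g1 = g2 ∧ z1 = z2) := fun ⟨h1, h2⟩ => hab (hedge_eq_iff.mpr ⟨h1, h2⟩)
      have d13 : ¬(g1 = g3 ∧ z1 = z3) := fun ⟨h1, h2⟩ => hac (hedge_eq_iff.mpr ⟨h1, h2⟩)
      have d23 : ¬(g2 = g3 ∧ z2 = z3) := fun ⟨h1, h2⟩ => hbc (hedge_eq_iff.mpr ⟨h1, h2⟩)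
      exact u3 hS d12 d13 d23 ha hb hc' hem
    omega

end EgpAux

/-- If `r ≥ 2`, then `gp_e(P_r □ P_2) = r + 2`. -/
theorem egp_grid_two (r : ℕ) (hr : 2 ≤ r) :
    IsGreatest
      {n : ℕ | ∃ S : Set (Sym2 (Fin r × Fin 2)), IsEdgeGPSet (gridGraph r 2) S ∧ S.ncard = n}
      (r + 2) := by
  constructor
  · exact ⟨EgpAux.Sopt r hr, EgpAux.Sopt_gp hr, EgpAux.Sopt_ncard hr⟩
  · rintro n ⟨S, hS, rfl⟩
    exact EgpAux.upper_bound hr hS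
end

section
/- If r ≥ s ≥ 6, then the grid P_r □ P_s admits an isometric path edge cover consisting of r + s − 4 geodesics; consequently ip_e(P_r □ P_s) ≤ r + s − 4. -/
open SimpleGraph

/-- An indexed family of `k` geodesics of `G` is an isometric path edge cover if every
edge of `G` lies on at least one of them. -/
def IsIsometricPathEdgeCover {V : Type*} (G : SimpleGraph V) (k : ℕ)
    (u v : Fin k → V) (p : ∀ i, G.Walk (u i) (v i)) : Prop :=
  (∀ i, IsGeodesic G (p i)) ∧ ∀ e ∈ G.edgeSet, ∃ i, e ∈ (p i).edges

namespace GridIpe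
variable {r s : ℕ}

def emb (r s : ℕ) (c : ℕ × ℕ) (h1 : c.1 < r) (h2 : c.2 < s) : Fin r × Fin s :=
  (⟨c.1, h1⟩, ⟨c.2, h2⟩)

lemma adj_emb {c d : ℕ × ℕ} (h1 : c.1 < r) (h2 : c.2 < s) (h3 : d.1 < r) (h4 : d.2 < s)
    (h : (c.1 = d.1 ∧ (c.2 + 1 = d.2 ∨ d.2 + 1 = c.2)) ∨
         (c.2 = d.2 ∧ (c.1 + 1 = d.1 ∨ d.1 + 1 = c.1))) :
    (gridGraph r s).Adj (emb r s c h1 h2) (emb r s d h3 h4) := by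
  have hiff : (gridGraph r s).Adj (emb r s c h1 h2) (emb r s d h3 h4) ↔
      ((pathGraph r).Adj ⟨c.1, h1⟩ ⟨d.1, h3⟩ ∧ (⟨c.2, h2⟩ : Fin s) = ⟨d.2, h4⟩) ∨
      ((pathGraph s).Adj ⟨c.2, h2⟩ ⟨d.2, h4⟩ ∧ (⟨c.1, h1⟩ : Fin r) = ⟨d.1, h3⟩) := Iff.rfl
  rw [hiff, pathGraph_adj, pathGraph_adj]
  simp only [Fin.mk.injEq]
  omega

lemma adj_cases {x y : Fin r × Fin s} (h : (gridGraph r s).Adj x y) :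
    (x.1.val = y.1.val ∧ (x.2.val + 1 = y.2.val ∨ y.2.val + 1 = x.2.val)) ∨
    (x.2.val = y.2.val ∧ (x.1.val + 1 = y.1.val ∨ y.1.val + 1 = x.1.val)) := by
  have h' : ((pathGraph r).Adj x.1 y.1 ∧ x.2 = y.2) ∨
      ((pathGraph s).Adj x.2 y.2 ∧ x.1 = y.1) := h
  rw [pathGraph_adj, pathGraph_adj] at h'
  rcases h' with ⟨h1, h2⟩ | ⟨h1, h2⟩
  · exact Or.inr ⟨by rw [h2], h1⟩
  · exact Or.inl ⟨by rw [h2], h1⟩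

def mkWalk (r s : ℕ) (f : ℕ → ℕ × ℕ) :
    (n : ℕ) → (hb : ∀ t, t ≤ n → (f t).1 < r ∧ (f t).2 < s) →
    (hadj : ∀ t, t < n → ∀ h1 h2 h3 h4,
      (gridGraph r s).Adj (emb r s (f t) h1 h2) (emb r s (f (t+1)) h3 h4)) →
    (gridGraph r s).Walk (emb r s (f 0) (hb 0 (Nat.zero_le _)).1 (hb 0 (Nat.zero_le _)).2)
      (emb r s (f n) (hb n le_rfl).1 (hb n le_rfl).2)
  | 0, _, _ => Walk.nil
  | n+1, hb, hadj =>
      (mkWalk r s f n (fun t ht => hb t (Nat.le_succ_of_le ht))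
        (fun t ht => hadj t (Nat.lt_succ_of_lt ht))).concat
        (hadj n (Nat.lt_succ_self n) ((hb n (Nat.le_succ n)).1) ((hb n (Nat.le_succ n)).2)
          ((hb (n+1) le_rfl).1) ((hb (n+1) le_rfl).2))

lemma mkWalk_length (r s : ℕ) (f : ℕ → ℕ × ℕ) (n : ℕ) :
    ∀ hb hadj, (mkWalk r s f n hb hadj).length = n := by
  induction n with
  | zero => intro hb hadj; rfl
  | succ n ih =>
    intro hb hadj
    simp only [mkWalk, Walk.length_concat, ih]

lemma mkWalk_mem_edges (r s : ℕ) (f : ℕ → ℕ × ℕ) (n t : ℕ) (h1 h2 h3 h4) :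
    ∀ (_ : t < n) hb hadj,
      s(emb r s (f t) h1 h2, emb r s (f (t+1)) h3 h4) ∈ (mkWalk r s f n hb hadj).edges := by
  induction n with
  | zero => intro ht; omega
  | succ n ih =>
    intro ht hb hadj
    simp only [mkWalk, Walk.edges_concat, List.concat_eq_append, List.mem_append]
    rcases Nat.lt_or_ge t n with h | h
    · exact Or.inl (ih h _ _)
    · have htn : t = n := by omega
      subst htn
      exact Or.inr (by simp)

lemma mem_edges_of_step (r s : ℕ) (f : ℕ → ℕ × ℕ) (n : ℕ) (hb hadj) (t : ℕ) (ht : t < n)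
    {c d : ℕ × ℕ} (hc : f t = c) (hd : f (t+1) = d) (h1 h2 h3 h4) :
    s(emb r s c h1 h2, emb r s d h3 h4) ∈ (mkWalk r s f n hb hadj).edges := by
  subst hc hd
  exact mkWalk_mem_edges r s f n t h1 h2 h3 h4 ht hb hadj

lemma mem_edges_of_step' (r s : ℕ) (f : ℕ → ℕ × ℕ) (n : ℕ) (hb hadj) (t : ℕ) (ht : t < n)
    {c d : ℕ × ℕ} (hc : f t = c) (hd : f (t+1) = d) (h1 h2 h3 h4) :
    s(emb r s d h3 h4, emb r s c h1 h2) ∈ (mkWalk r s f n hb hadj).edges := by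
  rw [Sym2.eq_swap]
  exact mem_edges_of_step r s f n hb hadj t ht hc hd h1 h2 h3 h4

lemma phi_le_length (ε δ : ℤ) (hε : ε = 1 ∨ ε = -1) (hδ : δ = 1 ∨ δ = -1)
    {a b : Fin r × Fin s} (w : (gridGraph r s).Walk a b) :
    (ε * b.1.val + δ * b.2.val) - (ε * a.1.val + δ * a.2.val) ≤ (w.length : ℤ) := by
  induction w with
  | nil => simp
  | @cons u v w h q ih =>
    have hadj := adj_cases h
    rw [Walk.length_cons]
    push_cast
    rcases hε with rfl | rfl <;> rcases hδ with rfl | rfl <;> omega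

lemma isGeodesic_of_phi {u v : Fin r × Fin s} (p : (gridGraph r s).Walk u v)
    (ε δ : ℤ) (hε : ε = 1 ∨ ε = -1) (hδ : δ = 1 ∨ δ = -1)
    (hlen : (p.length : ℤ) = (ε * v.1.val + δ * v.2.val) - (ε * u.1.val + δ * u.2.val)) :
    IsGeodesic (gridGraph r s) p := by
  unfold IsGeodesic
  refine le_antisymm ?_ (SimpleGraph.dist_le p)
  obtain ⟨q, hq⟩ := (p.reachable).exists_walk_length_eq_dist
  have h2 := phi_le_length ε δ hε hδ q
  rw [hq] at h2
  rw [← hlen] at h2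
  exact_mod_cast h2

/-! ### The six path shapes -/

def fQ1 (r s : ℕ) : ℕ → ℕ × ℕ := fun t => if t ≤ s - 1 then (1, s - 1 - t) else (t - (s-1) + 1, 0)
def fQ2 (r s : ℕ) : ℕ → ℕ × ℕ := fun t => if t ≤ s - 1 then (r-2, t) else (r - 2 - (t - (s-1)), s-1)
def fQ3 (r s : ℕ) : ℕ → ℕ × ℕ := fun t => if t ≤ r - 1 then (t, 1) else (r-1, 1 + (t - (r-1)))
def fQ4 (r s : ℕ) : ℕ → ℕ × ℕ := fun t => if t ≤ r - 1 then (r - 1 - t, s-2) else (0, s - 2 - (t - (r-1)))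
def fW (r s j : ℕ) : ℕ → ℕ × ℕ := fun t =>
  if t ≤ 2 then (r-1, j - 2 + t) else if t ≤ r + 1 then (r - 1 - (t - 2), j) else (0, j + (t - (r+1)))
def fV (r s i : ℕ) : ℕ → ℕ × ℕ := fun t =>
  if t ≤ 2 then (i - 2 + t, 0) else if t ≤ s + 1 then (i, t - 2) else (i + (t - (s+1)), s-1)

lemma hbQ1 (hs : 6 ≤ s) (hsr : s ≤ r) :
    ∀ t, t ≤ (s-1)+(r-2) → (fQ1 r s t).1 < r ∧ (fQ1 r s t).2 < s := by
  intro t ht; simp only [fQ1]; split_ifs <;> dsimp only <;> omega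

lemma hadjQ1 (hs : 6 ≤ s) (hsr : s ≤ r) :
    ∀ t, t < (s-1)+(r-2) → ∀ h1 h2 h3 h4,
      (gridGraph r s).Adj (emb r s (fQ1 r s t) h1 h2) (emb r s (fQ1 r s (t+1)) h3 h4) := by
  intro t ht h1 h2 h3 h4; apply adj_emb; simp only [fQ1]
  split_ifs <;> dsimp only <;> omega

lemma hbQ2 (hs : 6 ≤ s) (hsr : s ≤ r) :
    ∀ t, t ≤ (s-1)+(r-2) → (fQ2 r s t).1 < r ∧ (fQ2 r s t).2 < s := by
  intro t ht; simp only [fQ2]; split_ifs <;> dsimp only <;> omega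

lemma hadjQ2 (hs : 6 ≤ s) (hsr : s ≤ r) :
    ∀ t, t < (s-1)+(r-2) → ∀ h1 h2 h3 h4,
      (gridGraph r s).Adj (emb r s (fQ2 r s t) h1 h2) (emb r s (fQ2 r s (t+1)) h3 h4) := by
  intro t ht h1 h2 h3 h4; apply adj_emb; simp only [fQ2]
  split_ifs <;> dsimp only <;> omega

lemma hbQ3 (hs : 6 ≤ s) (hsr : s ≤ r) :
    ∀ t, t ≤ (r-1)+(s-2) → (fQ3 r s t).1 < r ∧ (fQ3 r s t).2 < s := by
  intro t ht; simp only [fQ3]; split_ifs <;> dsimp only <;> omega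

lemma hadjQ3 (hs : 6 ≤ s) (hsr : s ≤ r) :
    ∀ t, t < (r-1)+(s-2) → ∀ h1 h2 h3 h4,
      (gridGraph r s).Adj (emb r s (fQ3 r s t) h1 h2) (emb r s (fQ3 r s (t+1)) h3 h4) := by
  intro t ht h1 h2 h3 h4; apply adj_emb; simp only [fQ3]
  split_ifs <;> dsimp only <;> omega

lemma hbQ4 (hs : 6 ≤ s) (hsr : s ≤ r) :
    ∀ t, t ≤ (r-1)+(s-2) → (fQ4 r s t).1 < r ∧ (fQ4 r s t).2 < s := by
  intro t ht; simp only [fQ4]; split_ifs <;> dsimp only <;> omega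

lemma hadjQ4 (hs : 6 ≤ s) (hsr : s ≤ r) :
    ∀ t, t < (r-1)+(s-2) → ∀ h1 h2 h3 h4,
      (gridGraph r s).Adj (emb r s (fQ4 r s t) h1 h2) (emb r s (fQ4 r s (t+1)) h3 h4) := by
  intro t ht h1 h2 h3 h4; apply adj_emb; simp only [fQ4]
  split_ifs <;> dsimp only <;> omega

lemma hbW (hs : 6 ≤ s) (hsr : s ≤ r) {j : ℕ} (hj2 : 2 ≤ j) (hj3 : j ≤ s - 3) :
    ∀ t, t ≤ r + 3 → (fW r s j t).1 < r ∧ (fW r s j t).2 < s := by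
  intro t ht; simp only [fW]; split_ifs <;> dsimp only <;> omega

lemma hadjW (hs : 6 ≤ s) (hsr : s ≤ r) {j : ℕ} (hj2 : 2 ≤ j) (hj3 : j ≤ s - 3) :
    ∀ t, t < r + 3 → ∀ h1 h2 h3 h4,
      (gridGraph r s).Adj (emb r s (fW r s j t) h1 h2) (emb r s (fW r s j (t+1)) h3 h4) := by
  intro t ht h1 h2 h3 h4; apply adj_emb; simp only [fW]
  split_ifs <;> dsimp only <;> omega

lemma hbV (hs : 6 ≤ s) (hsr : s ≤ r) {i : ℕ} (hi2 : 2 ≤ i) (hi3 : i ≤ r - 3) :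
    ∀ t, t ≤ s + 3 → (fV r s i t).1 < r ∧ (fV r s i t).2 < s := by
  intro t ht; simp only [fV]; split_ifs <;> dsimp only <;> omega

lemma hadjV (hs : 6 ≤ s) (hsr : s ≤ r) {i : ℕ} (hi2 : 2 ≤ i) (hi3 : i ≤ r - 3) :
    ∀ t, t < s + 3 → ∀ h1 h2 h3 h4,
      (gridGraph r s).Adj (emb r s (fV r s i t) h1 h2) (emb r s (fV r s i (t+1)) h3 h4) := by
  intro t ht h1 h2 h3 h4; apply adj_emb; simp only [fV]
  split_ifs <;> dsimp only <;> omega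

/-! ### The family -/

def fam (r s : ℕ) (hs : 6 ≤ s) (hsr : s ≤ r) :
    ℕ → Σ (u : Fin r × Fin s) (v : Fin r × Fin s), (gridGraph r s).Walk u v
  | 0 => ⟨_, _, mkWalk r s (fQ1 r s) ((s-1)+(r-2)) (hbQ1 hs hsr) (hadjQ1 hs hsr)⟩
  | 1 => ⟨_, _, mkWalk r s (fQ2 r s) ((s-1)+(r-2)) (hbQ2 hs hsr) (hadjQ2 hs hsr)⟩
  | 2 => ⟨_, _, mkWalk r s (fQ3 r s) ((r-1)+(s-2)) (hbQ3 hs hsr) (hadjQ3 hs hsr)⟩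
  | 3 => ⟨_, _, mkWalk r s (fQ4 r s) ((r-1)+(s-2)) (hbQ4 hs hsr) (hadjQ4 hs hsr)⟩
  | (m+4) =>
    if h : m + 4 ≤ s - 1 then
      ⟨_, _, mkWalk r s (fW r s (m+2)) (r+3)
        (hbW hs hsr (by omega) (by omega)) (hadjW hs hsr (by omega) (by omega))⟩
    else if h2 : m + 4 ≤ r + s - 5 then
      ⟨_, _, mkWalk r s (fV r s (m+6-s)) (s+3)
        (hbV hs hsr (by omega) (by omega)) (hadjV hs hsr (by omega) (by omega))⟩
    else ⟨_, _, Walk.nil (u := emb r s (0,0) (by omega) (by omega))⟩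

/-! ### Geodesic property -/

lemma geoQ1 (hs : 6 ≤ s) (hsr : s ≤ r) :
    IsGeodesic (gridGraph r s)
      (mkWalk r s (fQ1 r s) ((s-1)+(r-2)) (hbQ1 hs hsr) (hadjQ1 hs hsr)) := by
  apply isGeodesic_of_phi _ 1 (-1) (Or.inl rfl) (Or.inr rfl)
  rw [mkWalk_length]
  have h0 : fQ1 r s 0 = (1, s-1) := by
    simp only [fQ1]; split_ifs <;> rw [Prod.mk.injEq] <;> omega
  have hn : fQ1 r s ((s-1)+(r-2)) = (r-1, 0) := by
    simp only [fQ1]; split_ifs <;> rw [Prod.mk.injEq] <;> omega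
  simp only [emb, h0, hn]
  omega

lemma geoQ2 (hs : 6 ≤ s) (hsr : s ≤ r) :
    IsGeodesic (gridGraph r s)
      (mkWalk r s (fQ2 r s) ((s-1)+(r-2)) (hbQ2 hs hsr) (hadjQ2 hs hsr)) := by
  apply isGeodesic_of_phi _ (-1) 1 (Or.inr rfl) (Or.inl rfl)
  rw [mkWalk_length]
  have h0 : fQ2 r s 0 = (r-2, 0) := by
    simp only [fQ2]; split_ifs <;> rw [Prod.mk.injEq] <;> omega
  have hn : fQ2 r s ((s-1)+(r-2)) = (0, s-1) := by
    simp only [fQ2]; split_ifs <;> rw [Prod.mk.injEq] <;> omega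
  simp only [emb, h0, hn]
  omega

lemma geoQ3 (hs : 6 ≤ s) (hsr : s ≤ r) :
    IsGeodesic (gridGraph r s)
      (mkWalk r s (fQ3 r s) ((r-1)+(s-2)) (hbQ3 hs hsr) (hadjQ3 hs hsr)) := by
  apply isGeodesic_of_phi _ 1 1 (Or.inl rfl) (Or.inl rfl)
  rw [mkWalk_length]
  have h0 : fQ3 r s 0 = (0, 1) := by
    simp only [fQ3]; split_ifs <;> rw [Prod.mk.injEq] <;> omega
  have hn : fQ3 r s ((r-1)+(s-2)) = (r-1, s-1) := by
    simp only [fQ3]; split_ifs <;> rw [Prod.mk.injEq] <;> omega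
  simp only [emb, h0, hn]
  omega

lemma geoQ4 (hs : 6 ≤ s) (hsr : s ≤ r) :
    IsGeodesic (gridGraph r s)
      (mkWalk r s (fQ4 r s) ((r-1)+(s-2)) (hbQ4 hs hsr) (hadjQ4 hs hsr)) := by
  apply isGeodesic_of_phi _ (-1) (-1) (Or.inr rfl) (Or.inr rfl)
  rw [mkWalk_length]
  have h0 : fQ4 r s 0 = (r-1, s-2) := by
    simp only [fQ4]; split_ifs <;> rw [Prod.mk.injEq] <;> omega
  have hn : fQ4 r s ((r-1)+(s-2)) = (0, 0) := by
    simp only [fQ4]; split_ifs <;> rw [Prod.mk.injEq] <;> omega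
  simp only [emb, h0, hn]
  omega

lemma geoW (hs : 6 ≤ s) (hsr : s ≤ r) {j : ℕ} (hj2 : 2 ≤ j) (hj3 : j ≤ s - 3) (hb hadj) :
    IsGeodesic (gridGraph r s) (mkWalk r s (fW r s j) (r+3) hb hadj) := by
  apply isGeodesic_of_phi _ (-1) 1 (Or.inr rfl) (Or.inl rfl)
  rw [mkWalk_length]
  have h0 : fW r s j 0 = (r-1, j-2) := by
    simp only [fW]; split_ifs <;> rw [Prod.mk.injEq] <;> omega
  have hn : fW r s j (r+3) = (0, j+2) := by
    simp only [fW]; split_ifs <;> rw [Prod.mk.injEq] <;> omega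
  simp only [emb, h0, hn]
  omega

lemma geoV (hs : 6 ≤ s) (hsr : s ≤ r) {i : ℕ} (hi2 : 2 ≤ i) (hi3 : i ≤ r - 3) (hb hadj) :
    IsGeodesic (gridGraph r s) (mkWalk r s (fV r s i) (s+3) hb hadj) := by
  apply isGeodesic_of_phi _ 1 1 (Or.inl rfl) (Or.inl rfl)
  rw [mkWalk_length]
  have h0 : fV r s i 0 = (i-2, 0) := by
    simp only [fV]; split_ifs <;> rw [Prod.mk.injEq] <;> omega
  have hn : fV r s i (s+3) = (i+2, s-1) := by
    simp only [fV]; split_ifs <;> rw [Prod.mk.injEq] <;> omega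
  simp only [emb, h0, hn]
  omega

lemma fam_geodesic (hs : 6 ≤ s) (hsr : s ≤ r) (k : ℕ) :
    IsGeodesic (gridGraph r s) (fam r s hs hsr k).2.2 := by
  match k with
  | 0 => exact geoQ1 hs hsr
  | 1 => exact geoQ2 hs hsr
  | 2 => exact geoQ3 hs hsr
  | 3 => exact geoQ4 hs hsr
  | (m+4) =>
    rw [fam]
    by_cases h : m + 4 ≤ s - 1
    · rw [dif_pos h]
      apply geoW hs hsr (by omega) (by omega)
      · exact hbW hs hsr (by omega) (by omega)
      · exact hadjW hs hsr (by omega) (by omega)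
    · rw [dif_neg h]
      by_cases h2 : m + 4 ≤ r + s - 5
      · rw [dif_pos h2]
        apply geoV hs hsr (by omega) (by omega)
        · exact hbV hs hsr (by omega) (by omega)
        · exact hadjV hs hsr (by omega) (by omega)
      · rw [dif_neg h2]
        unfold IsGeodesic
        simp [SimpleGraph.dist_self]

/-! ### Membership transfer to `fam` -/

lemma famW_mem (hs : 6 ≤ s) (hsr : s ≤ r) (m : ℕ) (h : m + 4 ≤ s - 1)
    (e : Sym2 (Fin r × Fin s)) (hb hadj)
    (he : e ∈ (mkWalk r s (fW r s (m+2)) (r+3) hb hadj).edges) :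
    e ∈ ((fam r s hs hsr (m+4)).2.2).edges := by
  rw [fam, dif_pos h]
  exact he

lemma famV_mem (hs : 6 ≤ s) (hsr : s ≤ r) (m : ℕ) (h1 : ¬ m + 4 ≤ s - 1)
    (h2 : m + 4 ≤ r + s - 5) (e : Sym2 (Fin r × Fin s)) (hb hadj)
    (he : e ∈ (mkWalk r s (fV r s (m+6-s)) (s+3) hb hadj).edges) :
    e ∈ ((fam r s hs hsr (m+4)).2.2).edges := by
  rw [fam, dif_neg h1, dif_pos h2]
  exact he

/-! ### Coverage -/

lemma covH (hs : 6 ≤ s) (hsr : s ≤ r) (i j : ℕ) (hi : i + 1 < r) (hj : j < s) (h1 h2 h3 h4) :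
    ∃ k, k < r + s - 4 ∧
      s(emb r s (i,j) h1 h2, emb r s (i+1,j) h3 h4) ∈ ((fam r s hs hsr k).2.2).edges := by
  by_cases hj0 : j = 0
  · subst hj0
    by_cases hi0 : i = 0
    · subst hi0
      refine ⟨(2+s-6)+4, by omega, famV_mem hs hsr (2+s-6) (by omega) (by omega) _
        (hbV hs hsr (by omega) (by omega)) (hadjV hs hsr (by omega) (by omega)) ?_⟩
      refine mem_edges_of_step r s _ (s+3) _ _ 0 (by omega) ?_ ?_ h1 h2 h3 h4
      · simp only [fV]; split_ifs <;> rw [Prod.mk.injEq] <;> omega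
      · simp only [fV]; split_ifs <;> rw [Prod.mk.injEq] <;> omega
    · refine ⟨0, by omega, ?_⟩
      refine mem_edges_of_step r s (fQ1 r s) ((s-1)+(r-2)) (hbQ1 hs hsr) (hadjQ1 hs hsr)
        (s+i-2) (by omega) ?_ ?_ h1 h2 h3 h4
      · simp only [fQ1]; split_ifs <;> rw [Prod.mk.injEq] <;> omega
      · simp only [fQ1]; split_ifs <;> rw [Prod.mk.injEq] <;> omega
  · by_cases hj1 : j = 1
    · subst hj1
      refine ⟨2, by omega, ?_⟩
      refine mem_edges_of_step r s (fQ3 r s) ((r-1)+(s-2)) (hbQ3 hs hsr) (hadjQ3 hs hsr)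
        i (by omega) ?_ ?_ h1 h2 h3 h4
      · simp only [fQ3]; split_ifs <;> rw [Prod.mk.injEq] <;> omega
      · simp only [fQ3]; split_ifs <;> rw [Prod.mk.injEq] <;> omega
    · by_cases hjs2 : j = s-2
      · subst hjs2
        refine ⟨3, by omega, ?_⟩
        refine mem_edges_of_step' r s (fQ4 r s) ((r-1)+(s-2)) (hbQ4 hs hsr) (hadjQ4 hs hsr)
          (r-2-i) (by omega) ?_ ?_ h3 h4 h1 h2
        · simp only [fQ4]; split_ifs <;> rw [Prod.mk.injEq] <;> omega
        · simp only [fQ4]; split_ifs <;> rw [Prod.mk.injEq] <;> omega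
      · by_cases hjs1 : j = s-1
        · subst hjs1
          by_cases hir : i = r-2
          · subst hir
            refine ⟨(r+s-9)+4, by omega, famV_mem hs hsr (r+s-9) (by omega) (by omega) _
              (hbV hs hsr (by omega) (by omega)) (hadjV hs hsr (by omega) (by omega)) ?_⟩
            refine mem_edges_of_step r s _ (s+3) _ _ (s+2) (by omega) ?_ ?_ h1 h2 h3 h4
            · simp only [fV]; split_ifs <;> rw [Prod.mk.injEq] <;> omega
            · simp only [fV]; split_ifs <;> rw [Prod.mk.injEq] <;> omega
          · refine ⟨1, by omega, ?_⟩
            refine mem_edges_of_step' r s (fQ2 r s) ((s-1)+(r-2)) (hbQ2 hs hsr) (hadjQ2 hs hsr)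
              (r+s-4-i) (by omega) ?_ ?_ h3 h4 h1 h2
            · simp only [fQ2]; split_ifs <;> rw [Prod.mk.injEq] <;> omega
            · simp only [fQ2]; split_ifs <;> rw [Prod.mk.injEq] <;> omega
        · -- 2 ≤ j ≤ s-3 : W_j
          refine ⟨(j-2)+4, by omega, famW_mem hs hsr (j-2) (by omega) _
            (hbW hs hsr (by omega) (by omega)) (hadjW hs hsr (by omega) (by omega)) ?_⟩
          refine mem_edges_of_step' r s _ (r+3) _ _ (r-i) (by omega) ?_ ?_ h3 h4 h1 h2
          · simp only [fW]; split_ifs <;> rw [Prod.mk.injEq] <;> omega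
          · simp only [fW]; split_ifs <;> rw [Prod.mk.injEq] <;> omega

lemma covV (hs : 6 ≤ s) (hsr : s ≤ r) (i j : ℕ) (hi : i < r) (hj : j + 1 < s) (h1 h2 h3 h4) :
    ∃ k, k < r + s - 4 ∧
      s(emb r s (i,j) h1 h2, emb r s (i,j+1) h3 h4) ∈ ((fam r s hs hsr k).2.2).edges := by
  by_cases hi0 : i = 0
  · subst hi0
    by_cases hjs : j = s-2
    · subst hjs
      refine ⟨(s-5)+4, by omega, famW_mem hs hsr (s-5) (by omega) _
        (hbW hs hsr (by omega) (by omega)) (hadjW hs hsr (by omega) (by omega)) ?_⟩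
      refine mem_edges_of_step r s _ (r+3) _ _ (r+2) (by omega) ?_ ?_ h1 h2 h3 h4
      · simp only [fW]; split_ifs <;> rw [Prod.mk.injEq] <;> omega
      · simp only [fW]; split_ifs <;> rw [Prod.mk.injEq] <;> omega
    · refine ⟨3, by omega, ?_⟩
      refine mem_edges_of_step' r s (fQ4 r s) ((r-1)+(s-2)) (hbQ4 hs hsr) (hadjQ4 hs hsr)
        (r+s-4-j) (by omega) ?_ ?_ h3 h4 h1 h2
      · simp only [fQ4]; split_ifs <;> rw [Prod.mk.injEq] <;> omega
      · simp only [fQ4]; split_ifs <;> rw [Prod.mk.injEq] <;> omega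
  · by_cases hi1 : i = 1
    · subst hi1
      refine ⟨0, by omega, ?_⟩
      refine mem_edges_of_step' r s (fQ1 r s) ((s-1)+(r-2)) (hbQ1 hs hsr) (hadjQ1 hs hsr)
        (s-2-j) (by omega) ?_ ?_ h3 h4 h1 h2
      · simp only [fQ1]; split_ifs <;> rw [Prod.mk.injEq] <;> omega
      · simp only [fQ1]; split_ifs <;> rw [Prod.mk.injEq] <;> omega
    · by_cases hir2 : i = r-2
      · subst hir2
        refine ⟨1, by omega, ?_⟩
        refine mem_edges_of_step r s (fQ2 r s) ((s-1)+(r-2)) (hbQ2 hs hsr) (hadjQ2 hs hsr)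
          j (by omega) ?_ ?_ h1 h2 h3 h4
        · simp only [fQ2]; split_ifs <;> rw [Prod.mk.injEq] <;> omega
        · simp only [fQ2]; split_ifs <;> rw [Prod.mk.injEq] <;> omega
      · by_cases hir1 : i = r-1
        · subst hir1
          by_cases hj0 : j = 0
          · subst hj0
            refine ⟨0+4, by omega, famW_mem hs hsr 0 (by omega) _
              (hbW hs hsr (by omega) (by omega)) (hadjW hs hsr (by omega) (by omega)) ?_⟩
            refine mem_edges_of_step r s _ (r+3) _ _ 0 (by omega) ?_ ?_ h1 h2 h3 h4
            · simp only [fW]; split_ifs <;> rw [Prod.mk.injEq] <;> omega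
            · simp only [fW]; split_ifs <;> rw [Prod.mk.injEq] <;> omega
          · refine ⟨2, by omega, ?_⟩
            refine mem_edges_of_step r s (fQ3 r s) ((r-1)+(s-2)) (hbQ3 hs hsr) (hadjQ3 hs hsr)
              (r+j-2) (by omega) ?_ ?_ h1 h2 h3 h4
            · simp only [fQ3]; split_ifs <;> rw [Prod.mk.injEq] <;> omega
            · simp only [fQ3]; split_ifs <;> rw [Prod.mk.injEq] <;> omega
        · -- 2 ≤ i ≤ r-3 : V_i
          refine ⟨(i+s-6)+4, by omega, famV_mem hs hsr (i+s-6) (by omega) (by omega) _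
            (hbV hs hsr (by omega) (by omega)) (hadjV hs hsr (by omega) (by omega)) ?_⟩
          refine mem_edges_of_step r s _ (s+3) _ _ (j+2) (by omega) ?_ ?_ h1 h2 h3 h4
          · simp only [fV]; split_ifs <;> rw [Prod.mk.injEq] <;> omega
          · simp only [fV]; split_ifs <;> rw [Prod.mk.injEq] <;> omega

lemma eq_emb (x : Fin r × Fin s) (c : ℕ × ℕ) (h1 : c.1 < r) (h2 : c.2 < s)
    (e1 : x.1.val = c.1) (e2 : x.2.val = c.2) : x = emb r s c h1 h2 := by
  obtain ⟨⟨a, ha⟩, ⟨b, hb⟩⟩ := x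
  obtain ⟨c1, c2⟩ := c
  simp only [emb]
  simp_all [Prod.ext_iff, Fin.ext_iff]

end GridIpe

/-- If `r ≥ s ≥ 6`, then the grid `P_r □ P_s` admits an isometric path edge cover consisting
of `r + s - 4` geodesics; consequently `ip_e(P_r □ P_s) ≤ r + s - 4`. -/
theorem grid_ipe_cover (r s : ℕ) (hs : 6 ≤ s) (hrs : s ≤ r) :
    ∃ (u v : Fin (r + s - 4) → (Fin r × Fin s))
      (p : ∀ i, (gridGraph r s).Walk (u i) (v i)),
      IsIsometricPathEdgeCover (gridGraph r s) (r + s - 4) u v p := by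
  refine ⟨fun i => (GridIpe.fam r s hs hrs i.val).1, fun i => (GridIpe.fam r s hs hrs i.val).2.1,
    fun i => (GridIpe.fam r s hs hrs i.val).2.2, ⟨?_, ?_⟩⟩
  · intro i
    exact GridIpe.fam_geodesic hs hrs i.val
  · intro e he
    induction e using Sym2.ind with
    | _ x y =>
      rw [SimpleGraph.mem_edgeSet] at he
      have hx1 := x.1.isLt
      have hx2 := x.2.isLt
      have hy1 := y.1.isLt
      have hy2 := y.2.isLt
      rcases GridIpe.adj_cases he with ⟨h1, h2 | h2⟩ | ⟨h1, h2 | h2⟩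
      · -- vertical, x below y
        have hx : x = GridIpe.emb r s (x.1.val, x.2.val) x.1.isLt x.2.isLt :=
          GridIpe.eq_emb _ _ _ _ rfl rfl
        have hy : y = GridIpe.emb r s (x.1.val, x.2.val+1) (by omega) (by omega) :=
          GridIpe.eq_emb _ _ _ _ (by omega) (by omega)
        obtain ⟨k, hk, hmem⟩ := GridIpe.covV hs hrs x.1.val x.2.val (by omega) (by omega)
          x.1.isLt x.2.isLt (by omega) (by omega)
        have hedge : s(x, y) = s(GridIpe.emb r s (x.1.val, x.2.val) x.1.isLt x.2.isLt,
            GridIpe.emb r s (x.1.val, x.2.val+1) (by omega) (by omega)) :=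
          by rw [← hx, ← hy]
        exact ⟨⟨k, by omega⟩, by rw [hedge]; exact hmem⟩
      · -- vertical, y below x
        have hx : x = GridIpe.emb r s (y.1.val, y.2.val+1) (by omega) (by omega) :=
          GridIpe.eq_emb _ _ _ _ (by omega) (by omega)
        have hy : y = GridIpe.emb r s (y.1.val, y.2.val) y.1.isLt y.2.isLt :=
          GridIpe.eq_emb _ _ _ _ rfl rfl
        obtain ⟨k, hk, hmem⟩ := GridIpe.covV hs hrs y.1.val y.2.val (by omega) (by omega)
          y.1.isLt y.2.isLt (by omega) (by omega)
        have hedge : s(x, y) = s(GridIpe.emb r s (y.1.val, y.2.val+1) (by omega) (by omega),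
            GridIpe.emb r s (y.1.val, y.2.val) y.1.isLt y.2.isLt) :=
          by rw [← hx, ← hy]
        refine ⟨⟨k, by omega⟩, ?_⟩
        rw [hedge, Sym2.eq_swap]
        exact hmem
      · -- horizontal, x left of y
        have hx : x = GridIpe.emb r s (x.1.val, x.2.val) x.1.isLt x.2.isLt :=
          GridIpe.eq_emb _ _ _ _ rfl rfl
        have hy : y = GridIpe.emb r s (x.1.val+1, x.2.val) (by omega) (by omega) :=
          GridIpe.eq_emb _ _ _ _ (by omega) (by omega)
        obtain ⟨k, hk, hmem⟩ := GridIpe.covH hs hrs x.1.val x.2.val (by omega) (by omega)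
          x.1.isLt x.2.isLt (by omega) (by omega)
        have hedge : s(x, y) = s(GridIpe.emb r s (x.1.val, x.2.val) x.1.isLt x.2.isLt,
            GridIpe.emb r s (x.1.val+1, x.2.val) (by omega) (by omega)) :=
          by rw [← hx, ← hy]
        exact ⟨⟨k, by omega⟩, by rw [hedge]; exact hmem⟩
      · -- horizontal, y left of x
        have hx : x = GridIpe.emb r s (y.1.val+1, y.2.val) (by omega) (by omega) :=
          GridIpe.eq_emb _ _ _ _ (by omega) (by omega)
        have hy : y = GridIpe.emb r s (y.1.val, y.2.val) y.1.isLt y.2.isLt :=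
          GridIpe.eq_emb _ _ _ _ rfl rfl
        obtain ⟨k, hk, hmem⟩ := GridIpe.covH hs hrs y.1.val y.2.val (by omega) (by omega)
          y.1.isLt y.2.isLt (by omega) (by omega)
        have hedge : s(x, y) = s(GridIpe.emb r s (y.1.val+1, y.2.val) (by omega) (by omega),
            GridIpe.emb r s (y.1.val, y.2.val) y.1.isLt y.2.isLt) :=
          by rw [← hx, ← hy]
        refine ⟨⟨k, by omega⟩, ?_⟩
        rw [hedge, Sym2.eq_swap]
        exact hmem
end
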